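/- Let (F,σ) be a constant-stable difference field of characteristic 0, let λ > 1 be an integer, let α ∈ const(F,σ) with α^λ = 1, and let F[y] be the A-extension of order λ with σ(y) = α·y. Then const(F[y],σ) = const(F,σ) if and only if α is a primitive λ-th root of unity in F (i.e., α^λ = 1 and α^m ≠ 1 for every integer m with 1 ≤ m < λ). -/

import Mathlib

open Polynomial

noncomputable def twistP {F : Type*} [Field F] (σ : F ≃+* F) (α : F) (p : F[X]) : F[X] :=
  p.sum fun i a => Polynomial.monomial i (σ a * α ^ i)

lemma twistP_coeff {F : Type*} [Field F] (σ : F ≃+* F) (α : F) (p : F[X]) (n : ℕ) :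
    (twistP σ α p).coeff n = σ (p.coeff n) * α ^ n := by
  rw [twistP, Polynomial.coeff_sum]
  simp only [coeff_monomial]
  rw [Polynomial.sum]
  by_cases hn : n ∈ p.support
  · rw [Finset.sum_eq_single n]
    · simp
    · intro b _ hb; simp [hb]
    · intro h; exact absurd hn h
  · rw [Finset.sum_eq_zero]
    · simp [Polynomial.notMem_support_iff.mp hn]
    · intro b hb
      have : b ≠ n := fun h => hn (h ▸ hb)
      simp [this]

lemma twistP_monomial {F : Type*} [Field F] (σ : F ≃+* F) (α : F) (n : ℕ) (a : F) :
    twistP σ α (monomial n a) = monomial n (σ a * α ^ n) := by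
  rw [twistP, Polynomial.sum_monomial_index]
  simp

lemma twistP_add {F : Type*} [Field F] (σ : F ≃+* F) (α : F) (p q : F[X]) :
    twistP σ α (p + q) = twistP σ α p + twistP σ α q := by
  rw [twistP, twistP, twistP, Polynomial.sum_add_index]
  · intro i; simp
  · intro i b c; rw [map_add, add_mul, map_add]



/-- Let `(F,σ)` be a constant-stable difference field of characteristic 0,
`λ > 1`, `α ∈ const(F,σ)` with `α^λ = 1`, and `F[y] = F[z]/⟨z^λ − 1⟩` the A-extension of
order `λ` with `σ(y) = α·y`. Then `const(F[y],σ) = const(F,σ)` iff `α` is a primitive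
`λ`-th root of unity. -/
theorem stmt5 {F : Type*} [Field F] [CharZero F]
    (σ : F ≃+* F)
    (hCS : ∀ k : ℕ, 1 ≤ k → ∀ c : F, (⇑σ)^[k] c = c → σ c = c)
    (lam : ℕ) (hlam : 1 < lam)
    (α : F) (hαconst : σ α = α) (hord : α ^ lam = 1)
    (π : Polynomial F →+*
        (Polynomial F ⧸ Ideal.span {(Polynomial.X : Polynomial F) ^ lam - 1}))
    (hπ : π = Ideal.Quotient.mk (Ideal.span {(Polynomial.X : Polynomial F) ^ lam - 1}))
    (σ' : (Polynomial F ⧸ Ideal.span {(Polynomial.X : Polynomial F) ^ lam - 1}) ≃+*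
        (Polynomial F ⧸ Ideal.span {(Polynomial.X : Polynomial F) ^ lam - 1}))
    (hC : ∀ a : F, σ' (π (Polynomial.C a)) = π (Polynomial.C (σ a)))
    (hY : σ' (π Polynomial.X) = π (Polynomial.C α * Polynomial.X)) :
    (∀ f, σ' f = f → ∃ c : F, σ c = c ∧ f = π (Polynomial.C c)) ↔
      (∀ m : ℕ, 1 ≤ m → m < lam → α ^ m ≠ 1) := by
  classical
  have hlam0 : lam ≠ 0 := by omega
  have hdegm : (Polynomial.X ^ lam - 1 : Polynomial F).degree = (lam : ℕ) := by
    have := Polynomial.degree_X_pow_sub_C (R := F) (Nat.pos_of_ne_zero hlam0) 1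
    simpa using this
  have hmem : (Polynomial.X ^ lam - 1 : Polynomial F) ∈
      Ideal.span {(Polynomial.X : Polynomial F) ^ lam - 1} :=
    Ideal.subset_span rfl
  have hπm : π (Polynomial.X ^ lam - 1) = 0 := by
    rw [hπ]; exact (Ideal.Quotient.eq_zero_iff_mem).mpr hmem
  have hlow : ∀ p q : Polynomial F, p.degree < (lam : ℕ) → q.degree < (lam : ℕ) →
      π p = π q → p = q := by
    intro p q hp hq hpq
    rw [hπ, Ideal.Quotient.eq, Ideal.mem_span_singleton] at hpq
    by_contra hne
    have hsub : p - q ≠ 0 := sub_ne_zero.mpr hne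
    have h1 : ((lam : ℕ) : WithBot ℕ) ≤ (p - q).degree := by
      rw [← hdegm]; exact Polynomial.degree_le_of_dvd hpq hsub
    have h2 : (p - q).degree < (lam : ℕ) :=
      lt_of_le_of_lt (Polynomial.degree_sub_le p q) (max_lt hp hq)
    exact absurd (lt_of_le_of_lt h1 h2) (lt_irrefl _)
  have htwist : ∀ p : Polynomial F, σ' (π p) = π (twistP σ α p) := by
    intro p
    induction p using Polynomial.induction_on' with
    | add p q hp hq => rw [twistP_add, map_add, map_add, map_add, hp, hq]
    | monomial n a =>
      have step : σ' (π (Polynomial.monomial n a)) =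
          π (Polynomial.C (σ a)) * π (Polynomial.C α * Polynomial.X) ^ n := by
        rw [← Polynomial.C_mul_X_pow_eq_monomial, map_mul, map_pow, map_mul, map_pow, hC, hY]
      rw [step, ← map_pow, ← map_mul, twistP_monomial, ← Polynomial.C_mul_X_pow_eq_monomial]
      congr 1
      rw [mul_pow, ← Polynomial.C_pow, ← mul_assoc, ← Polynomial.C_mul]
  have hα0 : α ≠ 0 := by
    intro h
    rw [h, zero_pow hlam0] at hord
    exact zero_ne_one hord
  constructor
  · -- forward
    intro h m hm1 hmlam hαm
    have hfix : σ' (π (Polynomial.X ^ m)) = π (Polynomial.X ^ m) := by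
      rw [map_pow π, map_pow σ', hY, ← map_pow, mul_pow, ← Polynomial.C_pow, hαm,
        Polynomial.C_1, one_mul, map_pow]
    obtain ⟨c, _, hc⟩ := h _ hfix
    have hXm : (Polynomial.X : Polynomial F) ^ m = Polynomial.C c := by
      apply hlow
      · rw [Polynomial.degree_X_pow]
        exact_mod_cast hmlam
      · exact lt_of_le_of_lt Polynomial.degree_C_le
          (by exact_mod_cast Nat.pos_of_ne_zero hlam0)
      · exact hc
    have h1 : ((Polynomial.X : Polynomial F) ^ m).coeff m = 1 := by simp
    have h2 : (Polynomial.C c : Polynomial F).coeff m = 0 := by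
      rw [Polynomial.coeff_C, if_neg (by omega)]
    rw [hXm, h2] at h1
    exact one_ne_zero h1.symm
  · -- backward
    intro hprim f hf
    obtain ⟨p0, hp0⟩ : ∃ p0, π p0 = f := by
      rw [hπ]; exact Ideal.Quotient.mk_surjective f
    have hmonic : (Polynomial.X ^ lam - 1 : Polynomial F).Monic := by
      have := Polynomial.monic_X_pow_sub_C (R := F) 1 hlam0
      simpa using this
    set p : Polynomial F := p0 %ₘ (Polynomial.X ^ lam - 1) with hpdef
    have hdegp : p.degree < (lam : ℕ) := by
      rw [← hdegm]; exact Polynomial.degree_modByMonic_lt p0 hmonic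
    have hπp : π p = f := by
      rw [hpdef, Polynomial.modByMonic_eq_sub_mul_div p0 _, map_sub, map_mul, hπm,
        zero_mul, sub_zero, hp0]
    have hfixp : π (twistP σ α p) = π p := by
      rw [← htwist, hπp, hf]
    have hdegt : (twistP σ α p).degree < (lam : ℕ) := by
      refine lt_of_le_of_lt ?_ hdegp
      rw [Polynomial.degree_le_iff_coeff_zero]
      intro m hm
      rw [twistP_coeff, Polynomial.coeff_eq_zero_of_degree_lt hm, map_zero, zero_mul]
    have heq : twistP σ α p = p := hlow _ _ hdegt hdegp hfixp
    have key : ∀ n : ℕ, σ (p.coeff n) * α ^ n = p.coeff n := by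
      intro n
      have := congrArg (fun q : Polynomial F => q.coeff n) heq
      simpa only [twistP_coeff] using this
    have hzero : ∀ n : ℕ, 1 ≤ n → p.coeff n = 0 := by
      intro n hn
      by_cases hnlam : n < lam
      · set a := p.coeff n with ha
        have hαn0 : α ^ n ≠ 0 := pow_ne_zero _ hα0
        set β := (α ^ n)⁻¹ with hβ
        have hσβ : σ β = β := by rw [hβ, map_inv₀, map_pow, hαconst]
        have hσa : σ a = a * β := by
          rw [hβ, eq_mul_inv_iff_mul_eq₀ hαn0]
          exact key n
        have hiter : ∀ k : ℕ, (⇑σ)^[k] a = a * β ^ k := by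
          intro k
          induction k with
          | zero => simp
          | succ k ih =>
            rw [Function.iterate_succ_apply', ih, map_mul, map_pow, hσβ, hσa, pow_succ]
            ring
        have hβlam : β ^ lam = 1 := by
          rw [hβ, inv_pow, ← pow_mul, mul_comm, pow_mul, hord, one_pow, inv_one]
        have hfixa : (⇑σ)^[lam] a = a := by rw [hiter, hβlam, mul_one]
        have hσaa : σ a = a := hCS lam (by omega) a hfixa
        by_contra hane
        have hab : a * β = a * 1 := by rw [mul_one, ← hσa, hσaa]
        have hβ1 : β = 1 := mul_left_cancel₀ hane hab
        exact hprim n hn hnlam (inv_eq_one.mp (hβ ▸ hβ1))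
      · exact Polynomial.coeff_eq_zero_of_degree_lt
          (lt_of_lt_of_le hdegp (by exact_mod_cast Nat.le_of_not_lt hnlam))
    have hdegp0 : p.degree ≤ 0 := by
      rw [Polynomial.degree_le_iff_coeff_zero]
      intro m hm
      have hm1 : 1 ≤ m := by
        by_contra hcon
        interval_cases m
        · exact absurd hm (lt_irrefl _)
      exact hzero m hm1
    refine ⟨p.coeff 0, ?_, ?_⟩
    · have := key 0
      rwa [pow_zero, mul_one] at this
    · have hc : p = Polynomial.C (p.coeff 0) := Polynomial.eq_C_of_degree_le_zero hdegp0
      have h2 := congrArg π hc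
      rw [hπp] at h2
      exact h2
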